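/- If A is a bounded linear operator on a Hilbert space H, f_δ ∈ H with ‖f_δ‖ > δ > 0, a > 0, and u_a = (A*A + aI)^{-1} A* f_δ satisfies ‖A u_a − f_δ‖ = δ, then a ≤ δ‖A‖² / (‖f_δ‖ − δ). -/
import Mathlib

open ContinuousLinearMap

theorem dsm_aM_upper_bound
    {H : Type*} [NormedAddCommGroup H] [InnerProductSpace ℝ H] [CompleteSpace H]
    (A : H →L[ℝ] H) (fδ : H) (a δ : ℝ) (ha : 0 < a) (hδ : 0 < δ)
    (hf : δ < ‖fδ‖) (u : H)
    (hu : (adjoint A).comp A u + a • u = adjoint A fδ)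
    (hdisc : ‖A u - fδ‖ = δ) :
    a ≤ δ * ‖A‖ ^ 2 / (‖fδ‖ - δ) := by
  have h1 : a • u = adjoint A (fδ - A u) := by
    rw [map_sub, ← hu, comp_apply]; abel
  have h2 : a * ‖u‖ ≤ ‖A‖ * δ := by
    calc a * ‖u‖ = ‖a • u‖ := by rw [norm_smul, Real.norm_of_nonneg ha.le]
    _ = ‖adjoint A (fδ - A u)‖ := by rw [h1]
    _ ≤ ‖adjoint A‖ * ‖fδ - A u‖ := le_opNorm _ _
    _ = ‖A‖ * δ := by rw [LinearIsometryEquiv.norm_map adjoint A, norm_sub_rev, hdisc]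
  have h3 : ‖fδ‖ - δ ≤ ‖A u‖ := by
    have := norm_sub_norm_le fδ (A u)
    rw [norm_sub_rev, hdisc] at this
    linarith
  have h4 : ‖A u‖ ≤ ‖A‖ * ‖u‖ := le_opNorm A u
  rw [le_div_iff₀ (by linarith)]
  nlinarith [norm_nonneg A, norm_nonneg u, ha.le]
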